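/- For all integers s ≥ 1 and d ≥ 2, the distance Ramsey number satisfies R_D(s,s,d) ≤ 2·⌊d/2⌋·R(⌈s/⌊d/2⌋⌉, ⌈s/⌊d/2⌋⌉). -/

import Mathlib

/-- A simple graph `H` is isomorphic to a distance graph in `ℝ^d` if there is an
injective map of its vertices into `d`-dimensional Euclidean space sending
adjacent pairs to pairs at Euclidean distance exactly 1. -/
def IsDistGraphRealizable (d : ℕ) {V : Type} (H : SimpleGraph V) : Prop :=
  ∃ φ : V → EuclideanSpace ℝ (Fin d), Function.Injective φ ∧
    ∀ u v : V, H.Adj u v → dist (φ u) (φ v) = 1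

/-- The distance Ramsey number `R_D(s, t, d)`. -/
noncomputable def distRamsey (s t d : ℕ) : ℕ :=
  sInf {n : ℕ | ∀ G : SimpleGraph (Fin n),
    (∃ S : Finset (Fin n), S.card = s ∧
      IsDistGraphRealizable d (G.induce (↑S : Set (Fin n)))) ∨
    (∃ S : Finset (Fin n), S.card = t ∧
      IsDistGraphRealizable d (Gᶜ.induce (↑S : Set (Fin n))))}

/-- The classical Ramsey number `R(s, t)`: the minimum `n` such that every
simple graph `G` on `n` vertices contains an independent set of `s` vertices,
or its complement contains an independent set of `t` vertices. -/
noncomputable def ramsey (s t : ℕ) : ℕ :=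
  sInf {n : ℕ | ∀ G : SimpleGraph (Fin n),
    (∃ S : Finset (Fin n), S.card = s ∧ ∀ u ∈ S, ∀ v ∈ S, ¬ G.Adj u v) ∨
    (∃ S : Finset (Fin n), S.card = t ∧ ∀ u ∈ S, ∀ v ∈ S, ¬ Gᶜ.Adj u v)}



def MyIndep {V : Type*} (G : SimpleGraph V) (S : Finset V) : Prop :=
  ∀ u ∈ S, ∀ v ∈ S, ¬ G.Adj u v

lemma indep_map {V W : Type*} (G : SimpleGraph V) (G' : SimpleGraph W) (f : W ↪ V)
    (hadj : ∀ u v, G.Adj (f u) (f v) ↔ G'.Adj u v)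
    (S : Finset W) (hS : MyIndep G' S) : MyIndep G (S.map f) := by
  intro u hu v hv
  simp only [Finset.mem_map] at hu hv
  obtain ⟨a, ha, rfl⟩ := hu
  obtain ⟨b, hb, rfl⟩ := hv
  rw [hadj]
  exact hS a ha b hb

lemma ramsey_exists_aux : ∀ (c a b : ℕ), a + b ≤ c →
    ∃ N : ℕ, ∀ (V : Type) (_ : Fintype V) (G : SimpleGraph V),
      N ≤ Fintype.card V →
      (∃ S : Finset V, S.card = a ∧ MyIndep G S) ∨
      (∃ S : Finset V, S.card = b ∧ MyIndep Gᶜ S) := by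
  intro c
  induction c with
  | zero =>
    intro a b hab
    refine ⟨0, fun V _ G _ => ?_⟩
    have : a = 0 := by omega
    subst this
    exact Or.inl ⟨∅, by simp [MyIndep]⟩
  | succ c ih =>
    intro a b hab
    match a, b with
    | 0, b => exact ⟨0, fun V _ G _ => Or.inl ⟨∅, by simp [MyIndep]⟩⟩
    | a+1, 0 => exact ⟨0, fun V _ G _ => Or.inr ⟨∅, by simp [MyIndep]⟩⟩
    | a+1, b+1 =>
      obtain ⟨N₁, h₁⟩ := ih a (b+1) (by omega)
      obtain ⟨N₂, h₂⟩ := ih (a+1) b (by omega)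
      refine ⟨N₁ + N₂ + 1, fun V _ G hcard => ?_⟩
      classical
      have hne : Nonempty V := by
        rw [← Fintype.card_pos_iff]; omega
      obtain ⟨v⟩ := hne
      set A : Finset V := Finset.univ.filter (fun u => u ≠ v ∧ ¬ G.Adj v u) with hA
      set B : Finset V := Finset.univ.filter (fun u => G.Adj v u) with hB
      have hcover : ∀ u : V, u = v ∨ u ∈ A ∨ u ∈ B := by
        intro u
        by_cases h1 : u = v
        · exact Or.inl h1
        · by_cases h2 : G.Adj v u
          · exact Or.inr (Or.inr (by simp [hB, h2]))
          · exact Or.inr (Or.inl (by simp [hA, h1, h2]))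
      have hdisj : Disjoint A B := by
        rw [Finset.disjoint_left]
        intro u hu hu'
        simp [hA] at hu; simp [hB] at hu'
        exact hu.2 hu'
      have hvA : v ∉ A := by simp [hA]
      have hvB : v ∉ B := by simp [hB]
      have hunion : insert v (A ∪ B) = Finset.univ := by
        ext u
        simp only [Finset.mem_insert, Finset.mem_union, Finset.mem_univ, iff_true]
        exact hcover u
      have hcards : 1 + A.card + B.card ≥ N₁ + N₂ + 1 := by
        have := Finset.card_insert_of_notMem
          (show v ∉ A ∪ B by simp only [Finset.mem_union]; tauto)
        rw [hunion] at this
        rw [Finset.card_union_of_disjoint hdisj] at this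
        rw [Finset.card_univ] at this
        omega
      have key : (N₁ ≤ A.card) ∨ (N₂ ≤ B.card) := by omega
      rcases key with hAc | hBc
      · -- restrict to A
        have := h₁ (↥A) inferInstance (G.comap (Subtype.val : ↥A → V))
          (by rw [Fintype.card_coe]; exact hAc)
        rcases this with ⟨S, hScard, hSind⟩ | ⟨S, hScard, hSind⟩
        · -- independent a-set in A, add v
          refine Or.inl ⟨insert v (S.map (Function.Embedding.subtype _)), ?_, ?_⟩
          · rw [Finset.card_insert_of_notMem, Finset.card_map, hScard]
            intro hmem
            simp only [Finset.mem_map, Function.Embedding.coe_subtype] at hmem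
            obtain ⟨⟨u, hu⟩, _, huv⟩ := hmem
            simp [hA] at hu
            exact hu.1 huv
          · intro x hx y hy hadj
            simp only [Finset.mem_insert] at hx hy
            have hmemA : ∀ z, z ∈ S.map (Function.Embedding.subtype _) → z ∈ A := by
              intro z hz
              simp only [Finset.mem_map, Function.Embedding.coe_subtype] at hz
              obtain ⟨⟨z', hz'⟩, _, rfl⟩ := hz
              exact hz'
            rcases hx with rfl | hx
            · rcases hy with rfl | hy
              · exact G.irrefl hadj
              · have := hmemA y hy
                simp [hA] at this
                exact this.2 hadj
            · rcases hy with rfl | hy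
              · have := hmemA x hx
                simp [hA] at this
                exact this.2 (G.adj_symm hadj)
              · exact indep_map G _ (Function.Embedding.subtype _)
                  (fun u v => by simp) S hSind x hx y hy hadj
        · -- clique (b+1)-set
          refine Or.inr ⟨S.map (Function.Embedding.subtype _), by simp [hScard], ?_⟩
          refine indep_map Gᶜ _ (Function.Embedding.subtype _) (fun u v => ?_) S hSind
          simp [SimpleGraph.compl_adj, Subtype.val_inj]
      · -- restrict to B
        have := h₂ (↥B) inferInstance (G.comap (Subtype.val : ↥B → V))
          (by rw [Fintype.card_coe]; exact hBc)
        rcases this with ⟨S, hScard, hSind⟩ | ⟨S, hScard, hSind⟩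
        · refine Or.inl ⟨S.map (Function.Embedding.subtype _), by simp [hScard], ?_⟩
          exact indep_map G _ (Function.Embedding.subtype _) (fun u v => by simp) S hSind
        · -- clique b-set in B, add v
          refine Or.inr ⟨insert v (S.map (Function.Embedding.subtype _)), ?_, ?_⟩
          · rw [Finset.card_insert_of_notMem, Finset.card_map, hScard]
            intro hmem
            simp only [Finset.mem_map, Function.Embedding.coe_subtype] at hmem
            obtain ⟨⟨u, hu⟩, _, huv⟩ := hmem
            simp [hB] at hu
            have huv' : u = v := huv
            subst huv'
            exact G.irrefl hu
          · intro x hx y hy hadj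
            simp only [Finset.mem_insert] at hx hy
            have hmemB : ∀ z, z ∈ S.map (Function.Embedding.subtype _) → z ∈ B := by
              intro z hz
              simp only [Finset.mem_map, Function.Embedding.coe_subtype] at hz
              obtain ⟨⟨z', hz'⟩, _, rfl⟩ := hz
              exact hz'
            rcases hx with rfl | hx
            · rcases hy with rfl | hy
              · exact Gᶜ.irrefl hadj
              · have := hmemB y hy
                simp [hB] at this
                exact hadj.2 this
            · rcases hy with rfl | hy
              · have := hmemB x hx
                simp [hB] at this
                exact hadj.2 (G.adj_symm this)
              · refine indep_map Gᶜ _ (Function.Embedding.subtype _) (fun u v => ?_)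
                  S hSind x hx y hy hadj
                simp [SimpleGraph.compl_adj, Subtype.val_inj]

lemma realizable_of_coloring {V : Type} [Fintype V] (H : SimpleGraph V) (k d : ℕ)
    (hkd : 2 * k ≤ d) (c : V → Fin k)
    (hc : ∀ u v, H.Adj u v → c u ≠ c v) : IsDistGraphRealizable d H := by
  classical
  cases isEmpty_or_nonempty V with
  | inl hemp =>
    exact ⟨fun v => isEmptyElim v, fun u => isEmptyElim u, fun u => isEmptyElim u⟩
  | inr hne =>
  set N : ℕ := Fintype.card V with hNdef
  have hN : 0 < N := Fintype.card_pos
  set ι : V ≃ Fin N := Fintype.equivFin V with hι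
  set t : V → ℝ := fun v => (ι v : ℝ) / N with ht
  have ht_nonneg : ∀ v, 0 ≤ t v := fun v => by positivity
  have ht_lt_one : ∀ v, t v < 1 := by
    intro v
    rw [ht, div_lt_one (by exact_mod_cast hN)]
    exact_mod_cast (ι v).isLt
  have ht_inj : Function.Injective t := by
    intro u v huv
    simp only [ht] at huv
    have hNne : (N:ℝ) ≠ 0 := by exact_mod_cast hN.ne'
    rw [div_eq_div_iff hNne hNne] at huv
    have h2 : ((ι u : ℕ) : ℝ) = ((ι v : ℕ) : ℝ) := mul_right_cancel₀ hNne huv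
    have h3 : ((ι u : Fin N) : ℕ) = ((ι v : Fin N) : ℕ) := by exact_mod_cast h2
    exact ι.injective (Fin.ext h3)
  have hπ : (1:ℝ) < Real.pi / 2 := by
    have := Real.pi_gt_three; linarith
  -- indices
  have hidx : ∀ v : V, 2 * (c v : ℕ) + 1 < d := by
    intro v
    have := (c v).isLt
    omega
  set i1 : V → Fin d := fun v => ⟨2 * (c v : ℕ), by have := hidx v; omega⟩ with hi1
  set i2 : V → Fin d := fun v => ⟨2 * (c v : ℕ) + 1, hidx v⟩ with hi2
  set a : V → ℝ := fun v => (Real.sqrt 2)⁻¹ * Real.cos (t v) with ha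
  set b : V → ℝ := fun v => (Real.sqrt 2)⁻¹ * Real.sin (t v) with hb
  set φ : V → EuclideanSpace ℝ (Fin d) := fun v =>
    (WithLp.equiv 2 (Fin d → ℝ)).symm
      (fun j => if j = i1 v then a v else if j = i2 v then b v else 0) with hφ
  have happ : ∀ (v : V) (j : Fin d),
      φ v j = if j = i1 v then a v else if j = i2 v then b v else 0 := by
    intro v j
    simp [hφ]
  have hi1i2 : ∀ u v : V, i1 u ≠ i2 v := by
    intro u v h
    have := Fin.val_eq_of_eq h
    simp [hi1, hi2] at this
    omega
  have hi1i1 : ∀ u v : V, c u ≠ c v → i1 u ≠ i1 v := by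
    intro u v hcc h
    have := Fin.val_eq_of_eq h
    simp only [hi1] at this
    exact hcc (Fin.ext (by omega))
  have hi2i2 : ∀ u v : V, c u ≠ c v → i2 u ≠ i2 v := by
    intro u v hcc h
    have := Fin.val_eq_of_eq h
    simp only [hi2] at this
    exact hcc (Fin.ext (by omega))
  have hsqrt2 : (Real.sqrt 2) ≠ 0 := by positivity
  have ha_pos : ∀ v, 0 < a v := by
    intro v
    apply mul_pos (by positivity)
    apply Real.cos_pos_of_mem_Ioo
    constructor
    · linarith [ht_nonneg v, Real.pi_pos]
    · linarith [ht_lt_one v]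
  have hab_sq : ∀ v, a v ^ 2 + b v ^ 2 = 1 / 2 := by
    intro v
    have h2 : (Real.sqrt 2) ^ 2 = 2 := Real.sq_sqrt (by norm_num)
    simp only [ha, hb, mul_pow]
    rw [← mul_add, inv_pow, h2, Real.cos_sq_add_sin_sq]
    norm_num
  refine ⟨φ, ?_, ?_⟩
  · -- injectivity
    intro u v huv
    by_cases hcc : c u = c v
    · have hi : i1 u = i1 v := by simp [hi1, hcc]
      have h1 := congrArg (fun x => x (i1 u)) huv
      have h1' : φ u (i1 u) = φ v (i1 u) := h1
      rw [happ, happ] at h1'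
      simp [hi, hi1i2] at h1'
      have hcos : Real.cos (t u) = Real.cos (t v) := by
        have := mul_left_cancel₀ (inv_ne_zero hsqrt2) (by simpa [ha] using h1')
        exact this
      have : t u = t v := by
        apply Real.injOn_cos ⟨ht_nonneg u, ?_⟩ ⟨ht_nonneg v, ?_⟩ hcos
        · linarith [ht_lt_one u, Real.pi_gt_three]
        · linarith [ht_lt_one v, Real.pi_gt_three]
      exact ht_inj this
    · exfalso
      have h1 : φ u (i1 u) = φ v (i1 u) := congrArg (fun x => x (i1 u)) huv
      rw [happ, happ] at h1
      rw [if_pos rfl, if_neg (hi1i1 u v hcc), if_neg (hi1i2 u v)] at h1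
      exact absurd h1 (ne_of_gt (ha_pos u))
  · -- distances
    intro u v hadj
    have hcc := hc u v hadj
    rw [EuclideanSpace.dist_eq]
    have hterm : ∀ j : Fin d, dist (φ u j) (φ v j) ^ 2 = (φ u j - φ v j) ^ 2 := by
      intro j; rw [Real.dist_eq, sq_abs]
    simp only [hterm]
    set A : Finset (Fin d) := {i1 u, i2 u, i1 v, i2 v} with hAdef
    have hzero : ∀ j ∈ Finset.univ, j ∉ A → (φ u j - φ v j) ^ 2 = 0 := by
      intro j _ hj
      simp only [hAdef, Finset.mem_insert, Finset.mem_singleton] at hj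
      push_neg at hj
      rw [happ, happ, if_neg hj.1, if_neg hj.2.1, if_neg hj.2.2.1, if_neg hj.2.2.2]
      ring
    rw [← Finset.sum_subset (Finset.subset_univ A) hzero]
    have d1 : i1 u ∉ ({i2 u, i1 v, i2 v} : Finset (Fin d)) := by
      simp only [Finset.mem_insert, Finset.mem_singleton]
      push_neg
      exact ⟨hi1i2 u u, hi1i1 u v hcc, hi1i2 u v⟩
    have d2 : i2 u ∉ ({i1 v, i2 v} : Finset (Fin d)) := by
      simp only [Finset.mem_insert, Finset.mem_singleton]
      push_neg
      exact ⟨fun h => hi1i2 v u h.symm, hi2i2 u v hcc⟩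
    have d3 : i1 v ∉ ({i2 v} : Finset (Fin d)) := by
      simp only [Finset.mem_singleton]
      exact hi1i2 v v
    rw [hAdef, Finset.sum_insert d1, Finset.sum_insert d2, Finset.sum_insert d3,
      Finset.sum_singleton]
    have e1 : (φ u (i1 u) - φ v (i1 u)) ^ 2 = a u ^ 2 := by
      rw [happ, happ, if_pos rfl, if_neg (hi1i1 u v hcc), if_neg (hi1i2 u v)]
      ring
    have e2 : (φ u (i2 u) - φ v (i2 u)) ^ 2 = b u ^ 2 := by
      rw [happ, happ, if_neg (fun h => hi1i2 u u h.symm), if_pos rfl,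
        if_neg (fun h => hi1i2 v u h.symm), if_neg (hi2i2 u v hcc)]
      ring
    have e3 : (φ u (i1 v) - φ v (i1 v)) ^ 2 = a v ^ 2 := by
      rw [happ, happ, if_neg (hi1i1 v u (Ne.symm hcc)), if_neg (hi1i2 v u), if_pos rfl]
      ring
    have e4 : (φ u (i2 v) - φ v (i2 v)) ^ 2 = b v ^ 2 := by
      rw [happ, happ, if_neg (fun h => hi1i2 u v h.symm), if_neg (hi2i2 v u (Ne.symm hcc)),
        if_neg (fun h => hi1i2 v v h.symm), if_pos rfl]
      ring
    rw [e1, e2, e3, e4]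
    rw [show a u ^ 2 + (b u ^ 2 + (a v ^ 2 + b v ^ 2)) = (a u ^2 + b u ^2) + (a v ^2 + b v ^2) by ring,
      hab_sq u, hab_sq v]
    norm_num


section Aux

lemma mono_of_subset {n r m : ℕ}
    (hr : ∀ G : SimpleGraph (Fin r),
      (∃ S : Finset (Fin r), S.card = m ∧ MyIndep G S) ∨
      (∃ S : Finset (Fin r), S.card = m ∧ MyIndep Gᶜ S))
    (G : SimpleGraph (Fin n)) (T : Finset (Fin n)) (hT : r ≤ T.card) :
    ∃ S : Finset (Fin n), S ⊆ T ∧ S.card = m ∧ (MyIndep G S ∨ MyIndep Gᶜ S) := by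
  classical
  obtain ⟨T', hT'sub, hT'card⟩ := Finset.exists_subset_card_eq hT
  set e : Fin r ≃ ↥T' := (finCongr hT'card.symm).trans T'.equivFin.symm with he
  set f : Fin r ↪ Fin n :=
    ⟨fun i => ((e i : ↥T') : Fin n), Subtype.val_injective.comp e.injective⟩ with hf
  have hfmem : ∀ i, f i ∈ T' := fun i => (e i).2
  have hsub : ∀ S' : Finset (Fin r), S'.map f ⊆ T := by
    intro S' x hx
    simp only [Finset.mem_map] at hx
    obtain ⟨i, _, rfl⟩ := hx
    exact hT'sub (hfmem i)
  rcases hr (G.comap f) with ⟨S', hcard, hind⟩ | ⟨S', hcard, hind⟩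
  · refine ⟨S'.map f, hsub S', by simp [hcard], Or.inl ?_⟩
    intro x hx y hy
    simp only [Finset.mem_map] at hx hy
    obtain ⟨i, hi, rfl⟩ := hx
    obtain ⟨j, hj, rfl⟩ := hy
    exact hind i hi j hj
  · refine ⟨S'.map f, hsub S', by simp [hcard], Or.inr ?_⟩
    intro x hx y hy
    simp only [Finset.mem_map] at hx hy
    obtain ⟨i, hi, rfl⟩ := hx
    obtain ⟨j, hj, rfl⟩ := hy
    intro hadj
    refine hind i hi j hj ?_
    rw [SimpleGraph.compl_adj] at hadj ⊢
    exact ⟨fun h => hadj.1 (congrArg f h), hadj.2⟩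

lemma extract {n r m : ℕ}
    (hr : ∀ G : SimpleGraph (Fin r),
      (∃ S : Finset (Fin r), S.card = m ∧ MyIndep G S) ∨
      (∃ S : Finset (Fin r), S.card = m ∧ MyIndep Gᶜ S))
    (G : SimpleGraph (Fin n)) :
    ∀ (j : ℕ) (T : Finset (Fin n)), r + j * m ≤ T.card + m →
    ∃ F : Fin j → Finset (Fin n),
      (∀ i, F i ⊆ T) ∧ (∀ i, (F i).card = m) ∧
      (∀ i, MyIndep G (F i) ∨ MyIndep Gᶜ (F i)) ∧
      (∀ i i', i ≠ i' → Disjoint (F i) (F i')) := by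
  intro j
  induction j with
  | zero =>
    intro T _
    exact ⟨Fin.elim0, fun i => i.elim0, fun i => i.elim0, fun i => i.elim0,
      fun i _ _ => i.elim0⟩
  | succ j ih =>
    intro T hT
    have hsm : (j+1) * m = j * m + m := Nat.succ_mul j m
    have hTr : r ≤ T.card := by omega
    obtain ⟨S, hSsub, hScard, hSmono⟩ := mono_of_subset hr G T hTr
    have hmT : m ≤ T.card := hScard ▸ Finset.card_le_card hSsub
    obtain ⟨F', h1, h2, h3, h4⟩ := ih (T \ S) (by
      rw [Finset.card_sdiff_of_subset hSsub, hScard]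
      omega)
    refine ⟨Fin.cons S F', ?_, ?_, ?_, ?_⟩
    · intro i
      rcases Fin.eq_zero_or_eq_succ i with rfl | ⟨a, rfl⟩
      · simpa using hSsub
      · simp only [Fin.cons_succ]
        exact (h1 a).trans Finset.sdiff_subset
    · intro i
      rcases Fin.eq_zero_or_eq_succ i with rfl | ⟨a, rfl⟩ <;> simp [hScard, h2]
    · intro i
      rcases Fin.eq_zero_or_eq_succ i with rfl | ⟨a, rfl⟩ <;> simp [hSmono, h3]
    · intro i i' hne
      rcases Fin.eq_zero_or_eq_succ i with rfl | ⟨a, rfl⟩ <;>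
        rcases Fin.eq_zero_or_eq_succ i' with rfl | ⟨b, rfl⟩
      · exact absurd rfl hne
      · simp only [Fin.cons_zero, Fin.cons_succ]
        exact (Disjoint.mono_left (h1 b) Finset.sdiff_disjoint).symm
      · simp only [Fin.cons_zero, Fin.cons_succ]
        exact Disjoint.mono_left (h1 a) Finset.sdiff_disjoint
      · simp only [Fin.cons_succ]
        exact h4 a b (fun h => hne (congrArg Fin.succ h))

end Aux

lemma assemble {ι : Type} [DecidableEq ι] {n k m s d : ℕ} (H : SimpleGraph (Fin n))
    (J : Finset ι) (hJ : J.card = k) (F : ι → Finset (Fin n))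
    (hcard : ∀ i ∈ J, (F i).card = m) (hind : ∀ i ∈ J, MyIndep H (F i))
    (hdisj : ∀ i ∈ J, ∀ i' ∈ J, i ≠ i' → Disjoint (F i) (F i'))
    (hs : s ≤ k * m) (hkd : 2 * k ≤ d) :
    ∃ S : Finset (Fin n), S.card = s ∧
      IsDistGraphRealizable d (H.induce (↑S : Set (Fin n))) := by
  classical
  set U := J.biUnion F with hU
  have hUcard : U.card = k * m := by
    rw [hU, Finset.card_biUnion hdisj, Finset.sum_congr rfl hcard, Finset.sum_const, hJ,
      smul_eq_mul]
  obtain ⟨S, hSU, hScard⟩ := Finset.exists_subset_card_eq (hUcard ▸ hs : s ≤ U.card)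
  refine ⟨S, hScard, ?_⟩
  have hmem : ∀ v : ↥(↑S : Set (Fin n)), ∃ i, i ∈ J ∧ (v : Fin n) ∈ F i := by
    intro v
    have hv : (v : Fin n) ∈ U := hSU v.2
    rw [hU, Finset.mem_biUnion] at hv
    obtain ⟨i, hi, hvi⟩ := hv
    exact ⟨i, hi, hvi⟩
  set idx : ↥(↑S : Set (Fin n)) → ↥J := fun v => ⟨(hmem v).choose, (hmem v).choose_spec.1⟩
    with hidx
  have hidxmem : ∀ v, (v : Fin n) ∈ F (idx v) := fun v => (hmem v).choose_spec.2
  set c : ↥(↑S : Set (Fin n)) → Fin k := fun v => finCongr hJ (J.equivFin (idx v)) with hc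
  apply realizable_of_coloring _ k d hkd c
  intro u v hadj hcuv
  have hiuv : idx u = idx v :=
    J.equivFin.injective ((finCongr hJ).injective hcuv)
  have hadj' : H.Adj (u : Fin n) (v : Fin n) := hadj
  refine hind (idx u) (idx u).2 (u : Fin n) (hidxmem u) (v : Fin n) ?_ hadj'
  rw [hiuv]
  exact hidxmem v

theorem distRamsey_le_ramsey (s d : ℕ) (hs : 1 ≤ s) (hd : 2 ≤ d) :
    distRamsey s s d ≤
      2 * (d / 2) *
        ramsey ⌈(s : ℝ) / ((d / 2 : ℕ) : ℝ)⌉₊ ⌈(s : ℝ) / ((d / 2 : ℕ) : ℝ)⌉₊ := by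
  classical
  set k : ℕ := d / 2 with hk
  have hk1 : 1 ≤ k := by omega
  set m : ℕ := ⌈(s : ℝ) / ((d / 2 : ℕ) : ℝ)⌉₊ with hm
  set r : ℕ := ramsey m m with hrdef
  obtain ⟨N, hN⟩ := ramsey_exists_aux (m + m) m m le_rfl
  have hex : Set.Nonempty {n : ℕ | ∀ G : SimpleGraph (Fin n),
      (∃ S : Finset (Fin n), S.card = m ∧ ∀ u ∈ S, ∀ v ∈ S, ¬ G.Adj u v) ∨
      (∃ S : Finset (Fin n), S.card = m ∧ ∀ u ∈ S, ∀ v ∈ S, ¬ Gᶜ.Adj u v)} :=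
    ⟨N, fun G => hN (Fin N) inferInstance G (by simp)⟩
  have hrmem : ∀ G : SimpleGraph (Fin r),
      (∃ S : Finset (Fin r), S.card = m ∧ MyIndep G S) ∨
      (∃ S : Finset (Fin r), S.card = m ∧ MyIndep Gᶜ S) := Nat.sInf_mem hex
  have hmr : m ≤ r := by
    rcases hrmem ⊥ with ⟨S, hS, _⟩ | ⟨S, hS, _⟩ <;>
    · rw [← hS]
      simpa using Finset.card_le_univ S
  have hsm : (s:ℝ) / (k:ℝ) ≤ (m:ℝ) := by rw [hm]; exact Nat.le_ceil _
  have hk0 : (0:ℝ) < (k:ℝ) := by exact_mod_cast hk1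
  rw [div_le_iff₀ hk0] at hsm
  have hskm : s ≤ k * m := by
    have h : (s:ℝ) ≤ ((k * m : ℕ) : ℝ) := by push_cast; nlinarith
    exact_mod_cast h
  have hgoalmem : (2 * k * r) ∈ {n : ℕ | ∀ G : SimpleGraph (Fin n),
      (∃ S : Finset (Fin n), S.card = s ∧
        IsDistGraphRealizable d (G.induce (↑S : Set (Fin n)))) ∨
      (∃ S : Finset (Fin n), S.card = s ∧
        IsDistGraphRealizable d (Gᶜ.induce (↑S : Set (Fin n))))} := by
    intro G
    obtain ⟨F, hFsub, hFcard, hFmono, hFdisj⟩ := extract hrmem G (2*k) Finset.univ (by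
      have hcard : (Finset.univ : Finset (Fin (2*k*r))).card = 2*k*r := by simp
      rw [hcard]
      have he1 : 2*k - 1 + 1 = 2*k := by omega
      have h1 : 2*k*m = (2*k-1)*m + m := by
        calc 2*k*m = (2*k-1+1)*m := by rw [he1]
        _ = (2*k-1)*m + m := by rw [Nat.add_mul, one_mul]
      have h2 : (2*k-1)*m ≤ (2*k-1)*r := Nat.mul_le_mul_left _ hmr
      have h3 : 2*k*r = (2*k-1)*r + r := by
        calc 2*k*r = (2*k-1+1)*r := by rw [he1]
        _ = (2*k-1)*r + r := by rw [Nat.add_mul, one_mul]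
      omega)
    set P : Fin (2*k) → Prop := fun i => MyIndep G (F i) with hP
    have hfilters : (Finset.univ.filter P).card +
        (Finset.univ.filter (fun i => ¬ P i)).card
          = (Finset.univ : Finset (Fin (2*k))).card :=
      Finset.card_filter_add_card_filter_not P
    have hcard2k : (Finset.univ : Finset (Fin (2*k))).card = 2*k := by simp
    have hcases : k ≤ (Finset.univ.filter P).card ∨
        k ≤ (Finset.univ.filter (fun i => ¬ P i)).card := by omega
    rcases hcases with hcase | hcase
    · obtain ⟨J, hJsub, hJcard⟩ := Finset.exists_subset_card_eq hcase
      left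
      refine assemble G J hJcard F (fun i _ => hFcard i) ?_
        (fun i _ i' _ h => hFdisj i i' h) hskm (by omega)
      intro i hi
      have hmem := hJsub hi
      simp only [Finset.mem_filter, hP] at hmem
      exact hmem.2
    · obtain ⟨J, hJsub, hJcard⟩ := Finset.exists_subset_card_eq hcase
      right
      refine assemble Gᶜ J hJcard F (fun i _ => hFcard i) ?_
        (fun i _ i' _ h => hFdisj i i' h) hskm (by omega)
      intro i hi
      have hmem := hJsub hi
      simp only [Finset.mem_filter, hP] at hmem
      rcases hFmono i with h | h
      · exact absurd h hmem.2
      · exact h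
  exact Nat.sInf_le hgoalmem
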